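/- For any p ∈ [1,∞], any function g on ℝ^d with ∇g ∈ L^p(ℝ^d), and any probability measures μ, ν on ℝ^d with finite first moment, ‖g ∗ (μ − ν)‖_{L^p} ≤ ‖∇g‖_{L^p} · W₁(μ, ν). -/

import Mathlib

open MeasureTheory ENNReal NNReal

/-- Convolution of a function with a measure: `(f ∗ μ)(x) = ∫ f(x - y) μ(dy)`. -/
noncomputable def measConv {d : ℕ} (f : EuclideanSpace ℝ (Fin d) → ℝ)
    (μ : Measure (EuclideanSpace ℝ (Fin d))) (x : EuclideanSpace ℝ (Fin d)) : ℝ :=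
  ∫ y, f (x - y) ∂μ

/-- Couplings of two measures. -/
def couplings {E : Type*} [MeasurableSpace E] (μ ν : Measure E) : Set (Measure (E × E)) :=
  {π | π.map Prod.fst = μ ∧ π.map Prod.snd = ν}

/-- The 1-Wasserstein distance, as an infimum over couplings. -/
noncomputable def W1 {E : Type*} [MeasurableSpace E] [EDist E] (μ ν : Measure E) : ℝ≥0∞ :=
  ⨅ π ∈ couplings μ ν, ∫⁻ q, edist q.1 q.2 ∂π

namespace W1aux

noncomputable def Np {α : Type*} [MeasurableSpace α] (p : ℝ≥0∞) (f : α → ℝ≥0∞)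
    (μ : Measure α) : ℝ≥0∞ :=
  if p = ∞ then essSup f μ else (∫⁻ x, f x ^ p.toReal ∂μ) ^ (1 / p.toReal)

variable {α : Type*} [MeasurableSpace α] {μ : Measure α} {p : ℝ≥0∞}

lemma eLpNorm_le_Np (hp : 1 ≤ p) {h : α → ℝ} {f : α → ℝ≥0∞}
    (hb : ∀ᵐ x ∂μ, (‖h x‖₊ : ℝ≥0∞) ≤ f x) : eLpNorm h p μ ≤ Np p f μ := by
  have hp0 : p ≠ 0 := (zero_lt_one.trans_le hp).ne'
  by_cases htop : p = ∞
  · subst htop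
    rw [eLpNorm_exponent_top, eLpNormEssSup, Np, if_pos rfl]
    exact essSup_mono_ae hb
  · rw [Np, if_neg htop, eLpNorm_eq_lintegral_rpow_enorm_toReal hp0 htop]
    exact ENNReal.rpow_le_rpow
      (lintegral_mono_ae (hb.mono fun x hx => ENNReal.rpow_le_rpow hx ENNReal.toReal_nonneg))
      (by positivity)

lemma eLpNorm_eq_Np (hp : 1 ≤ p) (h : α → ℝ) :
    eLpNorm h p μ = Np p (fun x => (‖h x‖₊ : ℝ≥0∞)) μ := by
  have hp0 : p ≠ 0 := (zero_lt_one.trans_le hp).ne'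
  by_cases htop : p = ∞
  · subst htop; rw [eLpNorm_exponent_top, eLpNormEssSup, Np, if_pos rfl]; rfl
  · rw [Np, if_neg htop, eLpNorm_eq_lintegral_rpow_enorm_toReal hp0 htop]; rfl

lemma ae_lt_top_of_Np_lt_top (hp : 1 ≤ p) {f : α → ℝ≥0∞} (hf : Measurable f)
    (hN : Np p f μ < ∞) : ∀ᵐ x ∂μ, f x < ∞ := by
  have hp0 : p ≠ 0 := (zero_lt_one.trans_le hp).ne'
  by_cases htop : p = ∞
  · subst htop
    rw [Np, if_pos rfl] at hN
    exact (ENNReal.ae_le_essSup f).mono fun x hx => lt_of_le_of_lt hx hN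
  · rw [Np, if_neg htop] at hN
    have hpr : 0 < p.toReal := ENNReal.toReal_pos hp0 htop
    have hint : ∫⁻ x, f x ^ p.toReal ∂μ ≠ ∞ := by
      intro hcon
      rw [hcon, ENNReal.top_rpow_of_pos (by positivity)] at hN
      exact (lt_irrefl _ hN).elim
    exact (ae_lt_top (hf.pow_const _) hint).mono fun x hx =>
      (ENNReal.rpow_lt_top_iff_of_pos hpr).mp hx

variable {d : ℕ}

lemma Np_conv_le (p : ℝ≥0∞) (hp : 1 ≤ p) (G : EuclideanSpace ℝ (Fin d) → ℝ≥0∞)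
    (hG : Measurable G) (σ : Measure (EuclideanSpace ℝ (Fin d))) [IsFiniteMeasure σ] :
    Np p (fun x => ∫⁻ y, G (x - y) ∂σ) volume ≤ Np p G volume * σ Set.univ := by
  have hp0 : p ≠ 0 := (zero_lt_one.trans_le hp).ne'
  have hGm : Measurable fun z : (EuclideanSpace ℝ (Fin d)) × (EuclideanSpace ℝ (Fin d)) =>
      G (z.1 - z.2) := hG.comp (measurable_fst.sub measurable_snd)
  rcases eq_or_ne (σ Set.univ) 0 with hσ0 | hσ0
  · have hzero : σ = 0 := Measure.measure_univ_eq_zero.mp hσ0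
    subst hzero
    simp only [lintegral_zero_measure]
    have hN0 : Np p (fun _ : EuclideanSpace ℝ (Fin d) => (0:ℝ≥0∞)) volume = 0 := by
      by_cases htop : p = ∞
      · simp [Np, htop, essSup_const_bot]
      · have hpr : 0 < p.toReal := ENNReal.toReal_pos hp0 htop
        rw [Np, if_neg htop]
        have h1 : ∫⁻ _x : EuclideanSpace ℝ (Fin d), (0:ℝ≥0∞) ^ p.toReal ∂volume = 0 := by
          rw [ENNReal.zero_rpow_of_pos hpr]
          simp
        rw [h1, ENNReal.zero_rpow_of_pos (by positivity)]
    simp [hN0]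
  by_cases htop : p = ∞
  · subst htop
    rw [Np, if_pos rfl, Np, if_pos rfl]
    set c := essSup G volume with hc
    set T : Set (EuclideanSpace ℝ (Fin d)) := {v | ¬ G v ≤ c} with hTdef
    have hmeasT : MeasurableSet T := (measurableSet_le hG measurable_const).compl
    have hTnull : volume T = 0 := by
      have := ENNReal.ae_le_essSup (μ := (volume : Measure (EuclideanSpace ℝ (Fin d)))) G
      rw [Filter.eventually_iff, mem_ae_iff] at this
      simpa [hTdef, Set.compl_setOf] using this
    have hind : ∀ x y : EuclideanSpace ℝ (Fin d),
        T.indicator (1 : EuclideanSpace ℝ (Fin d) → ℝ≥0∞) (x - y) =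
          ((fun y => x - y) ⁻¹' T).indicator (1 : EuclideanSpace ℝ (Fin d) → ℝ≥0∞) y := by
      intro x y
      by_cases h : x - y ∈ T <;>
        simp [Set.indicator_of_mem, Set.indicator_of_notMem, h, Set.mem_preimage]
    have hkey : ∀ᵐ x : EuclideanSpace ℝ (Fin d), σ ((fun y => x - y) ⁻¹' T) = 0 := by
      have hunc : Measurable fun z : (EuclideanSpace ℝ (Fin d)) × (EuclideanSpace ℝ (Fin d)) =>
          T.indicator (1 : EuclideanSpace ℝ (Fin d) → ℝ≥0∞) (z.1 - z.2) :=
        (measurable_const.indicator hmeasT).comp (measurable_fst.sub measurable_snd)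
      have hmeas : Measurable fun x : EuclideanSpace ℝ (Fin d) =>
          ∫⁻ y, T.indicator (1 : EuclideanSpace ℝ (Fin d) → ℝ≥0∞) (x - y) ∂σ :=
        Measurable.lintegral_prod_right'
          (f := fun z : _ × _ =>
            T.indicator (1 : EuclideanSpace ℝ (Fin d) → ℝ≥0∞) (z.1 - z.2)) hunc
      have hswap := lintegral_lintegral_swap
        (μ := (volume : Measure (EuclideanSpace ℝ (Fin d)))) (ν := σ)
        (f := fun x y => T.indicator (1 : EuclideanSpace ℝ (Fin d) → ℝ≥0∞) (x - y))
        hunc.aemeasurable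
      have h1 : ∀ y : EuclideanSpace ℝ (Fin d),
          ∫⁻ x, T.indicator (1 : EuclideanSpace ℝ (Fin d) → ℝ≥0∞) (x - y) = 0 := by
        intro y
        rw [lintegral_sub_right_eq_self
          (T.indicator (1 : EuclideanSpace ℝ (Fin d) → ℝ≥0∞)) y,
          lintegral_indicator_one hmeasT, hTnull]
      have hzero : ∫⁻ x,
          (∫⁻ y, T.indicator (1 : EuclideanSpace ℝ (Fin d) → ℝ≥0∞) (x - y) ∂σ) = 0 := by
        rw [hswap]; simp [h1]
      have := (lintegral_eq_zero_iff hmeas).mp hzero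
      refine this.mono fun x hx => ?_
      have hpre : MeasurableSet ((fun y => x - y) ⁻¹' T) :=
        (measurable_const.sub measurable_id) hmeasT
      have h2 : ∫⁻ y,
          ((fun y => x - y) ⁻¹' T).indicator (1 : EuclideanSpace ℝ (Fin d) → ℝ≥0∞) y ∂σ = 0 := by
        rw [← lintegral_congr fun y => (hind x y)]
        exact hx
      rwa [lintegral_indicator_one hpre] at h2
    have hae : ∀ᵐ x : EuclideanSpace ℝ (Fin d), (∫⁻ y, G (x - y) ∂σ) ≤ c * σ Set.univ := by
      refine hkey.mono fun x hx => ?_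
      have hyae : ∀ᵐ y ∂σ, G (x - y) ≤ c := ae_iff.mpr hx
      calc ∫⁻ y, G (x - y) ∂σ ≤ ∫⁻ _, c ∂σ := lintegral_mono_ae hyae
        _ = c * σ Set.univ := lintegral_const c
    exact essSup_le_of_ae_le _ hae
  · -- finite p
    have hpr : 0 < p.toReal := ENNReal.toReal_pos hp0 htop
    have hσtop : σ Set.univ ≠ ∞ := measure_ne_top σ _
    rw [Np, if_neg htop, Np, if_neg htop]
    have htrans : ∀ y : EuclideanSpace ℝ (Fin d),
        ∫⁻ x, G (x - y) ^ p.toReal = ∫⁻ x, G x ^ p.toReal :=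
      fun y => lintegral_sub_right_eq_self (fun v => G v ^ p.toReal) y
    rcases eq_or_lt_of_le hp with hp1 | hp1
    · -- p = 1
      have hpr1 : p.toReal = 1 := by rw [← hp1]; simp
      simp only [hpr1, ENNReal.rpow_one, one_div_one]
      rw [lintegral_lintegral_swap hGm.aemeasurable]
      have : ∀ y : EuclideanSpace ℝ (Fin d), ∫⁻ x, G (x - y) = ∫⁻ x, G x :=
        fun y => lintegral_sub_right_eq_self G y
      rw [lintegral_congr this, lintegral_const]
    · -- 1 < p
      have hpr1 : 1 < p.toReal := by
        rw [← ENNReal.toReal_one]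
        exact (ENNReal.toReal_lt_toReal (by simp) htop).mpr hp1
      set pr := p.toReal with hprdef
      set qr := Real.conjExponent pr with hqrdef
      have hpq : pr.HolderConjugate qr := Real.HolderConjugate.conjExponent hpr1
      set I : ℝ≥0∞ := ∫⁻ x, G x ^ pr with hIdef
      set B : ℝ≥0∞ := (σ Set.univ) ^ qr⁻¹ with hBdef
      set A : EuclideanSpace ℝ (Fin d) → ℝ≥0∞ := fun x => ∫⁻ y, G (x - y) ^ pr ∂σ with hAdef
      have hqrpos : 0 < qr := hpq.symm.pos
      have hBtop : B ≠ ∞ := by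
        rw [hBdef]
        exact (ENNReal.rpow_lt_top_of_nonneg (by positivity) hσtop).ne
      have hpoint : ∀ x : EuclideanSpace ℝ (Fin d),
          (∫⁻ y, G (x - y) ∂σ) ≤ (A x) ^ pr⁻¹ * B := by
        intro x
        have := lintegral_mul_le_Lp_mul_Lq σ hpq
          (f := fun y => G (x - y)) (g := fun _ => 1)
          ((hG.comp (measurable_const.sub measurable_id)).aemeasurable)
          aemeasurable_const
        simpa [ENNReal.one_rpow, lintegral_const, one_mul, mul_one, one_div] using this
      have hApt : ∀ x, ((A x) ^ pr⁻¹ * B) ^ pr = B ^ pr * A x := by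
        intro x
        rw [ENNReal.mul_rpow_of_nonneg _ _ (le_of_lt hpr), ← ENNReal.rpow_mul,
          inv_mul_cancel₀ hpr.ne', ENNReal.rpow_one, mul_comm]
      have hIA : ∫⁻ x, A x = I * σ Set.univ := by
        rw [hAdef]
        rw [lintegral_lintegral_swap ((hGm.pow_const pr).aemeasurable)]
        rw [lintegral_congr htrans, lintegral_const]
      have hchain : ∫⁻ x, (∫⁻ y, G (x - y) ∂σ) ^ pr ≤ B ^ pr * (I * σ Set.univ) := by
        calc ∫⁻ x, (∫⁻ y, G (x - y) ∂σ) ^ pr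
            ≤ ∫⁻ x, ((A x) ^ pr⁻¹ * B) ^ pr :=
              lintegral_mono fun x => ENNReal.rpow_le_rpow (hpoint x) (le_of_lt hpr)
          _ = ∫⁻ x, B ^ pr * A x := lintegral_congr fun x => hApt x
          _ = B ^ pr * ∫⁻ x, A x :=
              lintegral_const_mul' _ _ (ENNReal.rpow_ne_top_of_nonneg (le_of_lt hpr) hBtop)
          _ = B ^ pr * (I * σ Set.univ) := by rw [hIA]
      have hBσ : B * (σ Set.univ) ^ pr⁻¹ = σ Set.univ := by
        rw [hBdef, ← ENNReal.rpow_add _ _ hσ0 hσtop]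
        have hsum : qr⁻¹ + pr⁻¹ = 1 := by
          have := hpq.inv_add_inv_eq_one
          linarith
        rw [hsum, ENNReal.rpow_one]
      have hfinal : (B ^ pr * (I * σ Set.univ)) ^ pr⁻¹ = I ^ pr⁻¹ * σ Set.univ := by
        rw [ENNReal.mul_rpow_of_nonneg _ _ (by positivity),
          ENNReal.mul_rpow_of_nonneg _ _ (by positivity), ← ENNReal.rpow_mul,
          mul_inv_cancel₀ hpr.ne', ENNReal.rpow_one, mul_left_comm, hBσ]
      have hone_div : (1 : ℝ) / pr = pr⁻¹ := one_div pr
      rw [hone_div]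
      calc (∫⁻ x, (∫⁻ y, G (x - y) ∂σ) ^ pr) ^ pr⁻¹
          ≤ (B ^ pr * (I * σ Set.univ)) ^ pr⁻¹ :=
            ENNReal.rpow_le_rpow hchain (by positivity)
        _ = I ^ pr⁻¹ * σ Set.univ := hfinal

lemma pointP (g : EuclideanSpace ℝ (Fin d) → ℝ) (hg : Differentiable ℝ g)
    (x y z : EuclideanSpace ℝ (Fin d)) :
    (‖g (x - y) - g (x - z)‖₊ : ℝ≥0∞) ≤
      (∫⁻ t in Set.Icc (0:ℝ) 1, (‖fderiv ℝ g (x - (z + t • (y - z)))‖₊ : ℝ≥0∞)) *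
        (‖y - z‖₊ : ℝ≥0∞) := by
  by_cases hyz : y = z
  · simp [hyz]
  by_cases hfin : (∫⁻ t in Set.Icc (0:ℝ) 1, (‖fderiv ℝ g (x - (z + t • (y - z)))‖₊ : ℝ≥0∞)) = ∞
  · rw [hfin, ENNReal.top_mul]
    · exact le_top
    · simpa [sub_eq_zero] using hyz
  set c : ℝ → EuclideanSpace ℝ (Fin d) := fun t => x - (z + t • (y - z)) with hcdef
  have hcont : Continuous c := by
    apply continuous_const.sub
    exact continuous_const.add (continuous_id.smul continuous_const)
  set ψ : ℝ → ℝ := fun t => (fderiv ℝ g (c t)) (z - y) with hψdef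
  have hψmeas : Measurable ψ :=
    (measurable_fderiv_apply_const ℝ g (z - y)).comp hcont.measurable
  have hψbound : ∀ t : ℝ, (‖ψ t‖₊ : ℝ≥0∞) ≤ (‖fderiv ℝ g (c t)‖₊ : ℝ≥0∞) * ‖y - z‖₊ := by
    intro t
    have h1 : ‖ψ t‖₊ ≤ ‖fderiv ℝ g (c t)‖₊ * ‖z - y‖₊ :=
      ContinuousLinearMap.le_opNNNorm _ _
    have h2 : ‖z - y‖₊ = ‖y - z‖₊ := by rw [← neg_sub y z, nnnorm_neg]
    rw [← h2]
    exact_mod_cast h1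
  have hderiv : ∀ t ∈ Set.uIcc (0:ℝ) 1,
      HasDerivAt (fun t => g (c t)) (ψ t) t := by
    intro t _
    have hline : HasDerivAt c (z - y) t := by
      have h1 : HasDerivAt (fun t : ℝ => t • (y - z)) (y - z) t := by
        simpa using (hasDerivAt_id t).smul_const (y - z)
      have h2 := (h1.const_add z).const_sub x
      simpa [neg_sub] using h2
    exact (hg (c t)).hasFDerivAt.comp_hasDerivAt t hline
  have hintIoc : ∫⁻ t in Set.Ioc (0:ℝ) 1, (‖ψ t‖₊ : ℝ≥0∞) ≤
      (∫⁻ t in Set.Icc (0:ℝ) 1, (‖fderiv ℝ g (c t)‖₊ : ℝ≥0∞)) * ‖y - z‖₊ := by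
    calc ∫⁻ t in Set.Ioc (0:ℝ) 1, (‖ψ t‖₊ : ℝ≥0∞)
        ≤ ∫⁻ t in Set.Ioc (0:ℝ) 1, (‖fderiv ℝ g (c t)‖₊ : ℝ≥0∞) * ‖y - z‖₊ :=
          lintegral_mono fun t => hψbound t
      _ = (∫⁻ t in Set.Ioc (0:ℝ) 1, (‖fderiv ℝ g (c t)‖₊ : ℝ≥0∞)) * ‖y - z‖₊ :=
          lintegral_mul_const' _ _ ENNReal.coe_ne_top
      _ ≤ (∫⁻ t in Set.Icc (0:ℝ) 1, (‖fderiv ℝ g (c t)‖₊ : ℝ≥0∞)) * ‖y - z‖₊ := by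
          gcongr ?_ * _
          exact lintegral_mono_set (Set.Ioc_subset_Icc_self (a := (0:ℝ)) (b := 1))
  have hFin : HasFiniteIntegral ψ (volume.restrict (Set.Ioc (0:ℝ) 1)) := by
    rw [HasFiniteIntegral]
    refine lt_of_le_of_lt hintIoc ?_
    exact ENNReal.mul_lt_top (lt_of_le_of_ne le_top hfin) ENNReal.coe_lt_top
  have hInt : IntervalIntegrable ψ volume 0 1 := by
    rw [intervalIntegrable_iff_integrableOn_Ioc_of_le zero_le_one]
    exact ⟨hψmeas.aestronglyMeasurable.restrict, hFin⟩
  have hFTC := intervalIntegral.integral_eq_sub_of_hasDerivAt hderiv hInt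
  have hc1 : c 1 = x - y := by rw [hcdef]; simp
  have hc0 : c 0 = x - z := by rw [hcdef]; simp
  have heq : g (x - y) - g (x - z) = ∫ t in (0:ℝ)..1, ψ t := by
    rw [hFTC, hc1, hc0]
  rw [heq, intervalIntegral.integral_of_le zero_le_one]
  calc (‖∫ t in Set.Ioc (0:ℝ) 1, ψ t‖₊ : ℝ≥0∞)
      ≤ ∫⁻ t in Set.Ioc (0:ℝ) 1, ‖ψ t‖₊ := enorm_integral_le_lintegral_enorm _
    _ ≤ _ := hintIoc

noncomputable def sigmaPi (π : Measure ((EuclideanSpace ℝ (Fin d)) × (EuclideanSpace ℝ (Fin d)))) :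
    Measure (EuclideanSpace ℝ (Fin d)) :=
  ((π.prod (volume.restrict (Set.Icc (0:ℝ) 1))).withDensity
      (fun r => (‖r.1.1 - r.1.2‖₊ : ℝ≥0∞))).map (fun r => r.1.2 + r.2 • (r.1.1 - r.1.2))

lemma measurable_cmap : Measurable (fun r : ((EuclideanSpace ℝ (Fin d)) ×
    (EuclideanSpace ℝ (Fin d))) × ℝ => r.1.2 + r.2 • (r.1.1 - r.1.2)) :=
  (measurable_snd.comp measurable_fst).add (measurable_snd.smul
    ((measurable_fst.comp measurable_fst).sub (measurable_snd.comp measurable_fst)))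

lemma measurable_wmap : Measurable (fun r : ((EuclideanSpace ℝ (Fin d)) ×
    (EuclideanSpace ℝ (Fin d))) × ℝ => (‖r.1.1 - r.1.2‖₊ : ℝ≥0∞)) :=
  ((measurable_fst.comp measurable_fst).sub (measurable_snd.comp measurable_fst)).enorm

lemma Hrep (G : EuclideanSpace ℝ (Fin d) → ℝ≥0∞) (hG : Measurable G)
    (π : Measure ((EuclideanSpace ℝ (Fin d)) × (EuclideanSpace ℝ (Fin d)))) [SFinite π]
    (x : EuclideanSpace ℝ (Fin d)) :
    ∫⁻ q, (∫⁻ t in Set.Icc (0:ℝ) 1, G (x - (q.2 + t • (q.1 - q.2)))) *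
        (‖q.1 - q.2‖₊ : ℝ≥0∞) ∂π = ∫⁻ w, G (x - w) ∂(sigmaPi π) := by
  have hGx : Measurable fun w : EuclideanSpace ℝ (Fin d) => G (x - w) :=
    hG.comp (measurable_const.sub measurable_id)
  have h2 : Measurable fun r : ((EuclideanSpace ℝ (Fin d)) × (EuclideanSpace ℝ (Fin d))) × ℝ =>
      G (x - (r.1.2 + r.2 • (r.1.1 - r.1.2))) := hGx.comp measurable_cmap
  rw [sigmaPi, lintegral_map hGx measurable_cmap,
    lintegral_withDensity_eq_lintegral_mul _ measurable_wmap h2]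
  simp only [Pi.mul_apply]
  rw [lintegral_prod _ (by exact (measurable_wmap.mul h2).aemeasurable)]
  refine lintegral_congr fun q => ?_
  rw [mul_comm]
  exact (lintegral_const_mul' _ _ ENNReal.coe_ne_top).symm

lemma Hmass (π : Measure ((EuclideanSpace ℝ (Fin d)) × (EuclideanSpace ℝ (Fin d)))) [SFinite π] :
    sigmaPi π Set.univ = ∫⁻ q, edist q.1 q.2 ∂π := by
  rw [sigmaPi, Measure.map_apply measurable_cmap MeasurableSet.univ, Set.preimage_univ,
    withDensity_apply _ MeasurableSet.univ, Measure.restrict_univ]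
  rw [lintegral_prod _ measurable_wmap.aemeasurable]
  refine lintegral_congr fun q => ?_
  have : (∫⁻ y in Set.Icc (0:ℝ) 1,
      (‖(q, y).1.1 - (q, y).1.2‖₊ : ℝ≥0∞) ∂volume) =
      ∫⁻ _ in Set.Icc (0:ℝ) 1, (‖q.1 - q.2‖₊ : ℝ≥0∞) ∂volume := rfl
  rw [this, setLIntegral_const, Real.volume_Icc]
  simp [edist_eq_enorm_sub, enorm_eq_nnnorm]

lemma keyCoupling (p : ℝ≥0∞) (hp : 1 ≤ p)
    (g : EuclideanSpace ℝ (Fin d) → ℝ) (hg : Differentiable ℝ g)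
    (μ ν : Measure (EuclideanSpace ℝ (Fin d)))
    (π : Measure ((EuclideanSpace ℝ (Fin d)) × (EuclideanSpace ℝ (Fin d))))
    (hπuniv : π Set.univ = 1)
    (hπ1 : π.map Prod.fst = μ) (hπ2 : π.map Prod.snd = ν)
    (hK : ∫⁻ q, edist q.1 q.2 ∂π ≠ ∞)
    (hInt : ∀ᵐ x : EuclideanSpace ℝ (Fin d),
      Integrable (fun y => g (x - y)) μ ∧ Integrable (fun y => g (x - y)) ν) :
    eLpNorm (fun x => measConv g μ x - measConv g ν x) p volume ≤
      Np p (fun v => (‖fderiv ℝ g v‖₊ : ℝ≥0∞)) volume * ∫⁻ q, edist q.1 q.2 ∂π := by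
  haveI : IsFiniteMeasure π := ⟨by rw [hπuniv]; exact one_lt_top⟩
  set G : EuclideanSpace ℝ (Fin d) → ℝ≥0∞ := fun v => (‖fderiv ℝ g v‖₊ : ℝ≥0∞) with hGdef
  have hG : Measurable G := (measurable_fderiv ℝ g).enorm
  haveI : IsFiniteMeasure (sigmaPi π) :=
    ⟨by rw [Hmass]; exact lt_of_le_of_ne le_top hK⟩
  have hgm : ∀ x : EuclideanSpace ℝ (Fin d), ∀ ρ : Measure (EuclideanSpace ℝ (Fin d)),
      AEStronglyMeasurable (fun y => g (x - y)) ρ := fun x ρ =>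
    (hg.continuous.comp (continuous_const.sub continuous_id)).aestronglyMeasurable
  have hDae : ∀ᵐ x : EuclideanSpace ℝ (Fin d),
      (‖measConv g μ x - measConv g ν x‖₊ : ℝ≥0∞) ≤ ∫⁻ w, G (x - w) ∂(sigmaPi π) := by
    refine hInt.mono fun x ⟨h1, h2⟩ => ?_
    have i1 : Integrable (fun q : (EuclideanSpace ℝ (Fin d)) × (EuclideanSpace ℝ (Fin d)) =>
        g (x - q.1)) π := by
      have := (integrable_map_measure (hπ1 ▸ hgm x μ) measurable_fst.aemeasurable).mp
        (by rw [hπ1]; exact h1)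
      exact this
    have i2 : Integrable (fun q : (EuclideanSpace ℝ (Fin d)) × (EuclideanSpace ℝ (Fin d)) =>
        g (x - q.2)) π := by
      have := (integrable_map_measure (hπ2 ▸ hgm x ν) measurable_snd.aemeasurable).mp
        (by rw [hπ2]; exact h2)
      exact this
    have e1 : measConv g μ x = ∫ q, g (x - q.1) ∂π := by
      rw [measConv, ← hπ1, integral_map measurable_fst.aemeasurable (hπ1 ▸ hgm x μ)]
    have e2 : measConv g ν x = ∫ q, g (x - q.2) ∂π := by
      rw [measConv, ← hπ2, integral_map measurable_snd.aemeasurable (hπ2 ▸ hgm x ν)]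
    have eD : measConv g μ x - measConv g ν x = ∫ q, (g (x - q.1) - g (x - q.2)) ∂π := by
      rw [e1, e2, ← integral_sub i1 i2]
    rw [eD]
    calc (‖∫ q, (g (x - q.1) - g (x - q.2)) ∂π‖₊ : ℝ≥0∞)
        ≤ ∫⁻ q, (‖g (x - q.1) - g (x - q.2)‖₊ : ℝ≥0∞) ∂π :=
          enorm_integral_le_lintegral_enorm _
      _ ≤ ∫⁻ q, (∫⁻ t in Set.Icc (0:ℝ) 1, G (x - (q.2 + t • (q.1 - q.2)))) *
            (‖q.1 - q.2‖₊ : ℝ≥0∞) ∂π :=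
          lintegral_mono fun q => pointP g hg x q.1 q.2
      _ = ∫⁻ w, G (x - w) ∂(sigmaPi π) := Hrep G hG π x
  calc eLpNorm (fun x => measConv g μ x - measConv g ν x) p volume
      ≤ Np p (fun x => ∫⁻ w, G (x - w) ∂(sigmaPi π)) volume := eLpNorm_le_Np hp hDae
    _ ≤ Np p G volume * (sigmaPi π) Set.univ := Np_conv_le p hp G hG _
    _ = Np p G volume * ∫⁻ q, edist q.1 q.2 ∂π := by rw [Hmass]


lemma cost_prod_ne_top (μ ν : Measure (EuclideanSpace ℝ (Fin d)))
    [IsProbabilityMeasure μ] [IsProbabilityMeasure ν]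
    (hμ1 : ∫⁻ x, (‖x‖₊ : ℝ≥0∞) ∂μ < ⊤) (hν1 : ∫⁻ x, (‖x‖₊ : ℝ≥0∞) ∂ν < ⊤) :
    ∫⁻ q, edist q.1 q.2 ∂(μ.prod ν) ≠ ∞ := by
  have hb : ∀ q : (EuclideanSpace ℝ (Fin d)) × (EuclideanSpace ℝ (Fin d)),
      edist q.1 q.2 ≤ (‖q.1‖₊ : ℝ≥0∞) + (‖q.2‖₊ : ℝ≥0∞) := by
    intro q
    rw [edist_eq_enorm_sub]
    exact_mod_cast nnnorm_sub_le q.1 q.2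
  have h1 : ∫⁻ q, (‖q.1‖₊ : ℝ≥0∞) ∂(μ.prod ν) = ∫⁻ x, (‖x‖₊ : ℝ≥0∞) ∂μ := by
    have hmap : (μ.prod ν).map Prod.fst = μ := by rw [Measure.map_fst_prod]; simp
    have hnm : Measurable fun x : EuclideanSpace ℝ (Fin d) => (‖x‖₊ : ℝ≥0∞) :=
      measurable_id.enorm
    calc ∫⁻ q, (‖q.1‖₊ : ℝ≥0∞) ∂(μ.prod ν)
        = ∫⁻ x, (‖x‖₊ : ℝ≥0∞) ∂((μ.prod ν).map Prod.fst) :=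
          (lintegral_map hnm measurable_fst).symm
      _ = ∫⁻ x, (‖x‖₊ : ℝ≥0∞) ∂μ := by rw [hmap]
  have h2 : ∫⁻ q, (‖q.2‖₊ : ℝ≥0∞) ∂(μ.prod ν) = ∫⁻ x, (‖x‖₊ : ℝ≥0∞) ∂ν := by
    have hmap : (μ.prod ν).map Prod.snd = ν := by rw [Measure.map_snd_prod]; simp
    have hnm : Measurable fun x : EuclideanSpace ℝ (Fin d) => (‖x‖₊ : ℝ≥0∞) :=
      measurable_id.enorm
    calc ∫⁻ q, (‖q.2‖₊ : ℝ≥0∞) ∂(μ.prod ν)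
        = ∫⁻ x, (‖x‖₊ : ℝ≥0∞) ∂((μ.prod ν).map Prod.snd) :=
          (lintegral_map hnm measurable_snd).symm
      _ = ∫⁻ x, (‖x‖₊ : ℝ≥0∞) ∂ν := by rw [hmap]
  have := calc ∫⁻ q, edist q.1 q.2 ∂(μ.prod ν)
      ≤ ∫⁻ q, ((‖q.1‖₊ : ℝ≥0∞) + (‖q.2‖₊ : ℝ≥0∞)) ∂(μ.prod ν) := lintegral_mono hb
    _ = (∫⁻ q, (‖q.1‖₊ : ℝ≥0∞) ∂(μ.prod ν)) + ∫⁻ q, (‖q.2‖₊ : ℝ≥0∞) ∂(μ.prod ν) :=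
        lintegral_add_left measurable_fst.enorm _
    _ = (∫⁻ x, (‖x‖₊ : ℝ≥0∞) ∂μ) + ∫⁻ x, (‖x‖₊ : ℝ≥0∞) ∂ν := by rw [h1, h2]
  exact (lt_of_le_of_lt this (ENNReal.add_lt_top.mpr ⟨hμ1, hν1⟩)).ne

lemma ae_integrable (p : ℝ≥0∞) (hp : 1 ≤ p)
    (g : EuclideanSpace ℝ (Fin d) → ℝ) (hg : Differentiable ℝ g)
    (hgrad : MemLp (fun x => ‖fderiv ℝ g x‖) p volume)
    (μ ν : Measure (EuclideanSpace ℝ (Fin d)))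
    [IsProbabilityMeasure μ] [IsProbabilityMeasure ν]
    (hμ1 : ∫⁻ x, (‖x‖₊ : ℝ≥0∞) ∂μ < ⊤) (hν1 : ∫⁻ x, (‖x‖₊ : ℝ≥0∞) ∂ν < ⊤) :
    ∀ᵐ x : EuclideanSpace ℝ (Fin d),
      Integrable (fun y => g (x - y)) μ ∧ Integrable (fun y => g (x - y)) ν := by
  set G : EuclideanSpace ℝ (Fin d) → ℝ≥0∞ := fun v => (‖fderiv ℝ g v‖₊ : ℝ≥0∞) with hGdef
  have hG : Measurable G := (measurable_fderiv ℝ g).enorm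
  have hK : ∫⁻ q, edist q.1 q.2 ∂(μ.prod ν) ≠ ∞ := cost_prod_ne_top μ ν hμ1 hν1
  haveI : IsFiniteMeasure (sigmaPi (μ.prod ν)) :=
    ⟨by rw [Hmass]; exact lt_of_le_of_ne le_top hK⟩
  have hC : Np p G volume ≠ ∞ := by
    have h1 : eLpNorm (fun x => ‖fderiv ℝ g x‖) p volume = Np p G volume := by
      rw [eLpNorm_eq_Np hp]
      congr 1
      funext x
      rw [hGdef, nnnorm_norm]
    rw [← h1]
    exact hgrad.2.ne
  have hNp : Np p (fun x => ∫⁻ w, G (x - w) ∂(sigmaPi (μ.prod ν))) volume < ∞ := by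
    refine lt_of_le_of_lt (Np_conv_le p hp G hG _) ?_
    rw [Hmass]
    exact ENNReal.mul_lt_top (lt_of_le_of_ne le_top hC) (lt_of_le_of_ne le_top hK)
  have hmeasH : Measurable fun x => ∫⁻ w, G (x - w) ∂(sigmaPi (μ.prod ν)) :=
    Measurable.lintegral_prod_right'
      (f := fun z : (EuclideanSpace ℝ (Fin d)) × (EuclideanSpace ℝ (Fin d)) => G (z.1 - z.2))
      (hG.comp (measurable_fst.sub measurable_snd))
  have hfin := ae_lt_top_of_Np_lt_top hp hmeasH hNp
  haveI : (ae μ).NeBot := IsProbabilityMeasure.ae_neBot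
  haveI : (ae ν).NeBot := IsProbabilityMeasure.ae_neBot
  refine hfin.mono fun x hx => ?_
  have hFm : Measurable fun q : (EuclideanSpace ℝ (Fin d)) × (EuclideanSpace ℝ (Fin d)) =>
      (‖g (x - q.1) - g (x - q.2)‖₊ : ℝ≥0∞) := by
    apply Measurable.coe_nnreal_ennreal; apply Measurable.nnnorm
    exact ((hg.continuous.comp (continuous_const.sub continuous_fst)).sub
      (hg.continuous.comp (continuous_const.sub continuous_snd))).measurable
  have hJ : ∫⁻ q, (‖g (x - q.1) - g (x - q.2)‖₊ : ℝ≥0∞) ∂(μ.prod ν) < ∞ := by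
    refine lt_of_le_of_lt ?_ hx
    exact le_of_le_of_eq (lintegral_mono fun q => pointP g hg x q.1 q.2)
      (Hrep G hG (μ.prod ν) x)
  constructor
  · -- integrability w.r.t. μ
    have hsymm := lintegral_prod_symm (μ := μ) (ν := ν) _ hFm.aemeasurable
    have hmeasInner : Measurable fun z : EuclideanSpace ℝ (Fin d) =>
        ∫⁻ y, (‖g (x - y) - g (x - z)‖₊ : ℝ≥0∞) ∂μ :=
      Measurable.lintegral_prod_left'
        (f := fun q : (EuclideanSpace ℝ (Fin d)) × (EuclideanSpace ℝ (Fin d)) =>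
          (‖g (x - q.1) - g (x - q.2)‖₊ : ℝ≥0∞)) hFm
    have hae := ae_lt_top hmeasInner (by rw [← hsymm]; exact hJ.ne)
    obtain ⟨z₀, hz₀⟩ := hae.exists
    have hint1 : Integrable (fun y => g (x - y) - g (x - z₀)) μ := by
      constructor
      · exact ((hg.continuous.comp (continuous_const.sub continuous_id)).sub
          continuous_const).aestronglyMeasurable
      · rw [HasFiniteIntegral]
        exact hz₀
    have heq : (fun y => g (x - y)) = fun y => (g (x - y) - g (x - z₀)) + g (x - z₀) := by
      funext y; ring
    rw [heq]
    exact hint1.add (integrable_const _)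
  · -- integrability w.r.t. ν
    have hprod := lintegral_prod (μ := μ) (ν := ν) _ hFm.aemeasurable
    have hmeasInner : Measurable fun y : EuclideanSpace ℝ (Fin d) =>
        ∫⁻ z, (‖g (x - y) - g (x - z)‖₊ : ℝ≥0∞) ∂ν :=
      Measurable.lintegral_prod_right'
        (f := fun q : (EuclideanSpace ℝ (Fin d)) × (EuclideanSpace ℝ (Fin d)) =>
          (‖g (x - q.1) - g (x - q.2)‖₊ : ℝ≥0∞)) hFm
    have hae := ae_lt_top hmeasInner (by rw [← hprod]; exact hJ.ne)
    obtain ⟨y₀, hy₀⟩ := hae.exists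
    have hint1 : Integrable (fun z => g (x - y₀) - g (x - z)) ν := by
      constructor
      · exact (continuous_const.sub
          (hg.continuous.comp (continuous_const.sub continuous_id))).aestronglyMeasurable
      · rw [HasFiniteIntegral]
        exact hy₀
    have heq : (fun z => g (x - z)) = fun z => g (x - y₀) - (g (x - y₀) - g (x - z)) := by
      funext z; ring
    rw [heq]
    exact (integrable_const _).sub hint1

end W1aux

open W1aux in
/-- `‖g ∗ (μ - ν)‖_{L^p} ≤ ‖∇g‖_{L^p} W₁(μ, ν)` for probability measures with finite
first moment. -/
theorem conv_diff_Lp_le_grad_wasserstein {d : ℕ} (p : ℝ≥0∞) (hp : 1 ≤ p)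
    (g : EuclideanSpace ℝ (Fin d) → ℝ) (hg : Differentiable ℝ g)
    (hgrad : MemLp (fun x => ‖fderiv ℝ g x‖) p volume)
    (μ ν : Measure (EuclideanSpace ℝ (Fin d)))
    (hμ : IsProbabilityMeasure μ) (hν : IsProbabilityMeasure ν)
    (hμ1 : ∫⁻ x, (‖x‖₊ : ℝ≥0∞) ∂μ < ⊤) (hν1 : ∫⁻ x, (‖x‖₊ : ℝ≥0∞) ∂ν < ⊤) :
    eLpNorm (fun x => measConv g μ x - measConv g ν x) p volume ≤
      eLpNorm (fun x => ‖fderiv ℝ g x‖) p volume * W1 μ ν := by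
  set C := eLpNorm (fun x => ‖fderiv ℝ g x‖) p volume with hCdef
  have hCN : C = Np p (fun v => (‖fderiv ℝ g v‖₊ : ℝ≥0∞)) volume := by
    rw [hCdef, eLpNorm_eq_Np hp]
    congr 1
    funext x
    rw [nnnorm_norm]
  have hCtop : C ≠ ∞ := hgrad.2.ne
  have hInt := ae_integrable p hp g hg hgrad μ ν hμ1 hν1
  have hK0 : ∫⁻ q, edist q.1 q.2 ∂(μ.prod ν) ≠ ∞ := cost_prod_ne_top μ ν hμ1 hν1
  have hmap1 : (μ.prod ν).map Prod.fst = μ := by rw [Measure.map_fst_prod]; simp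
  have hmap2 : (μ.prod ν).map Prod.snd = ν := by rw [Measure.map_snd_prod]; simp
  by_cases hC0 : C = 0
  · have hbound := keyCoupling p hp g hg μ ν (μ.prod ν) (by simp) hmap1 hmap2 hK0 hInt
    rw [← hCN, hC0, zero_mul] at hbound
    exact le_trans hbound (by positivity)
  · have hrw : C * W1 μ ν = ⨅ π ∈ couplings μ ν, C * ∫⁻ q, edist q.1 q.2 ∂π := by
      rw [W1, ENNReal.mul_iInf_of_ne hC0 hCtop]
      exact iInf_congr fun π => ENNReal.mul_iInf_of_ne hC0 hCtop
    rw [hrw]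
    refine le_iInf₂ fun π hπ => ?_
    obtain ⟨hπ1, hπ2⟩ := hπ
    have hπuniv : π Set.univ = 1 := by
      have h1 : (π.map Prod.fst) Set.univ = π Set.univ := by
        rw [Measure.map_apply measurable_fst MeasurableSet.univ, Set.preimage_univ]
      rw [← h1, hπ1]
      exact measure_univ
    by_cases hcost : ∫⁻ q, edist q.1 q.2 ∂π = ∞
    · rw [hcost, ENNReal.mul_top hC0]
      exact le_top
    · have hbound := keyCoupling p hp g hg μ ν π hπuniv hπ1 hπ2 hcost hInt
      rw [← hCN] at hbound
      exact hbound
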